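/- Let G be a group, A = ℤ[G]/⟨1, g+g⁻¹⟩, and fix g, h ∈ G with [g,h] ≠ 1 (g and h do not commute). Define u : G → A on h by u(h) = [g] − [hgh⁻¹]. If G is a free group on {g, h} (so there are no relations beyond group axioms), then u(h) ≠ 0 in A. -/

import Mathlib

/-- The generating set `{1} ∪ {g + g⁻¹ : g ∈ G}` inside the group ring `ℤ[G]`. -/
def relSet (G : Type) [Group G] : Set (MonoidAlgebra ℤ G) :=
  {x | x = MonoidAlgebra.single (1 : G) (1 : ℤ) ∨
    ∃ g : G, x = MonoidAlgebra.single g (1 : ℤ) + MonoidAlgebra.single g⁻¹ (1 : ℤ)}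

/-- The subgroup `⟨1, g + g⁻¹⟩` of the additive group of `ℤ[G]`. -/
noncomputable def relSub (G : Type) [Group G] : AddSubgroup (MonoidAlgebra ℤ G) :=
  AddSubgroup.closure (relSet G)

/-- The abelian group `A = ℤ[G] / ⟨1, g + g⁻¹⟩`. -/
abbrev AA (G : Type) [Group G] := MonoidAlgebra ℤ G ⧸ relSub G

/-- Conjugation by `g` on `ℤ[G]`, extended ℤ-linearly from `h ↦ g h g⁻¹`. -/
noncomputable def conjHom (G : Type) [Group G] (g : G) : MonoidAlgebra ℤ G →+ MonoidAlgebra ℤ G :=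
  (MonoidAlgebra.mapDomainLinearMap ℤ ℤ (fun h => g * h * g⁻¹)).toAddMonoidHom

/-- The involution on `ℤ[G]`, extended ℤ-linearly from `g ↦ g⁻¹`. -/
noncomputable def invHom (G : Type) [Group G] : MonoidAlgebra ℤ G →+ MonoidAlgebra ℤ G :=
  (MonoidAlgebra.mapDomainLinearMap ℤ ℤ (fun g : G => g⁻¹)).toAddMonoidHom

namespace Stmt17Aux

noncomputable abbrev gg : FreeGroup Bool := FreeGroup.of true
noncomputable abbrev hh : FreeGroup Bool := FreeGroup.of false

/-- Weight function: `1` on `g`, `-1` on `g⁻¹`, `-1` on `hgh⁻¹`, `1` on `hg⁻¹h⁻¹`, else `0`. -/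
noncomputable def f (k : FreeGroup Bool) : ℤ :=
  if k = gg then 1 else if k = gg⁻¹ then -1 else
  if k = hh * gg * hh⁻¹ then -1 else if k = hh * gg⁻¹ * hh⁻¹ then 1 else 0

lemma f_odd (k : FreeGroup Bool) : f k⁻¹ = - f k := by
  by_cases h1 : k = gg
  · subst h1; decide
  by_cases h2 : k = gg⁻¹
  · subst h2; decide
  by_cases h3 : k = hh * gg * hh⁻¹
  · subst h3; decide
  by_cases h4 : k = hh * gg⁻¹ * hh⁻¹
  · subst h4; decide
  rw [mul_assoc] at h3 h4
  simp [f, h1, h2, h3, h4, inv_eq_iff_eq_inv, mul_inv_rev, mul_assoc]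

/-- The ℤ-linear functional `x ↦ ∑ x(a) f(a)`. -/
noncomputable def φ : MonoidAlgebra ℤ (FreeGroup Bool) →+ ℤ :=
  (Finsupp.liftAddHom (fun a => AddMonoidHom.mulRight (f a))).comp
    MonoidAlgebra.coeffAddEquiv.toAddMonoidHom

lemma φ_single (a : FreeGroup Bool) (c : ℤ) :
    φ (MonoidAlgebra.single a c) = c * f a :=
  Finsupp.liftAddHom_apply_single _ a c

lemma φ_rel : relSub (FreeGroup Bool) ≤ φ.ker := by
  rw [relSub, AddSubgroup.closure_le]
  rintro x (rfl | ⟨k, rfl⟩)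
  · simp [AddMonoidHom.mem_ker, φ_single, f]; decide
  · simp [AddMonoidHom.mem_ker, φ_single, f_odd]

end Stmt17Aux

/-- for `G` the free group on two generators `g, h` (which do not
commute), the element `u(h) = [g] - [hgh⁻¹]` is nonzero in `A = ℤ[G]/⟨1, g+g⁻¹⟩`. -/
theorem stmt_17 :
    (QuotientAddGroup.mk
        (MonoidAlgebra.single (FreeGroup.of true) (1 : ℤ)) : AA (FreeGroup Bool)) -
      QuotientAddGroup.mk
        (MonoidAlgebra.single
          (FreeGroup.of false * FreeGroup.of true * (FreeGroup.of false)⁻¹) (1 : ℤ))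
      ≠ 0 := by
  intro h
  rw [sub_eq_zero, QuotientAddGroup.eq] at h
  have h0 := Stmt17Aux.φ_rel h
  rw [AddMonoidHom.mem_ker, map_add, map_neg, Stmt17Aux.φ_single, Stmt17Aux.φ_single] at h0
  have : Stmt17Aux.f (FreeGroup.of true) = 1 := by decide
  rw [this] at h0
  have : Stmt17Aux.f (FreeGroup.of false * FreeGroup.of true * (FreeGroup.of false)⁻¹) = -1 := by
    decide
  rw [this] at h0
  norm_num at h0
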